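/- Let μ, γ > 0 and set ν = γ + 2μ. Define π_{0,0} = γ/ν and, for i ≥ 1, π_{i,0} = π_{0,i} = (μ/(μ+γ))^i · (γ/ν). Then: (i) f_{→0} := π_{0,0}·(γ/ν) + (π_{1,0} + π_{0,1})·((μ+γ)/ν) = γ/ν = π_{0,0}; (ii) f_d := π_{0,0}·(γ/ν) + Σ_{i=1}^{∞} (π_{0,i} + π_{i,0})·((μ+γ)/ν) = (2μ² + 2μγ + γ²)/ν²; and (iii) f_{→0}/f_d = γν/(γν + 2μ²), so that 1 − f_{→0}/f_d = 2μ²/(γν + 2μ²). -/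

import Mathlib

/-- High-traffic analysis of type-0 service starts in FJ-FA with availability one and
locality two (systematic rate `γ`, recovery rates `μ`, `ν = γ + 2μ`), with stationary
probabilities `π_{0,0} = γ/ν`, `π_{i,0} = π_{0,i} = (μ/(μ+γ))^i (γ/ν)` for `i ≥ 1`:
(i) `f_{→0} = π_{0,0} γ/ν + (π_{1,0}+π_{0,1})(μ+γ)/ν = γ/ν = π_{0,0}`;
(ii) `f_d = π_{0,0} γ/ν + Σ_{i≥1}(π_{0,i}+π_{i,0})(μ+γ)/ν = (2μ²+2μγ+γ²)/ν²`;
(iii) `f_{→0}/f_d = γν/(γν+2μ²)` and `1 - f_{→0}/f_d = 2μ²/(γν+2μ²)`. -/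
theorem high_traffic_type0_fraction
    (μ γ : ℝ) (hμ : 0 < μ) (hγ : 0 < γ) (ν : ℝ) (hν : ν = γ + 2 * μ)
    (f0 fd : ℝ)
    (hf0 : f0 = (γ / ν) * (γ / ν)
      + ((μ / (μ + γ)) ^ 1 * (γ / ν) + (μ / (μ + γ)) ^ 1 * (γ / ν)) * ((μ + γ) / ν))
    (hfd : fd = (γ / ν) * (γ / ν)
      + ∑' i : ℕ,
          ((μ / (μ + γ)) ^ (i + 1) * (γ / ν) + (μ / (μ + γ)) ^ (i + 1) * (γ / ν))
            * ((μ + γ) / ν)) :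
    (f0 = γ / ν) ∧
    (fd = (2 * μ ^ 2 + 2 * μ * γ + γ ^ 2) / ν ^ 2) ∧
    (f0 / fd = γ * ν / (γ * ν + 2 * μ ^ 2)) ∧
    (1 - f0 / fd = 2 * μ ^ 2 / (γ * ν + 2 * μ ^ 2)) := by
  have hμγ : 0 < μ + γ := by linarith
  have hν0 : 0 < ν := by rw [hν]; linarith
  set r : ℝ := μ / (μ + γ) with hrdef
  have hr0 : 0 ≤ r := by positivity
  have hr1 : r < 1 := by
    rw [hrdef, div_lt_one hμγ]; linarith
  have hgeo : ∑' i : ℕ, r ^ i = (1 - r)⁻¹ := tsum_geometric_of_lt_one hr0 hr1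
  have hsum : (∑' i : ℕ,
      (r ^ (i + 1) * (γ / ν) + r ^ (i + 1) * (γ / ν)) * ((μ + γ) / ν))
      = (1 - r)⁻¹ * (r * (2 * (γ / ν) * ((μ + γ) / ν))) := by
    rw [← hgeo, ← tsum_mul_right]
    congr 1; funext i; ring
  have h1r : 1 - r = γ / (μ + γ) := by
    field_simp [hrdef]
    rw [hrdef, sub_mul, div_mul_cancel₀ _ hμγ.ne']; ring
  have hne1 : μ + γ ≠ 0 := hμγ.ne'
  have hne2 : ν ≠ 0 := hν0.ne'
  -- f0
  have hf0' : f0 = γ / ν := by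
    rw [hf0, hrdef, hν]
    have : γ + 2 * μ ≠ 0 := by positivity
    field_simp
    ring
  have hfd' : fd = (2 * μ ^ 2 + 2 * μ * γ + γ ^ 2) / ν ^ 2 := by
    rw [hfd, hsum, h1r, hrdef, hν]
    rw [inv_div]
    field_simp
    ring
  have hden : 0 < γ * ν + 2 * μ ^ 2 := by positivity
  have hq : f0 / fd = γ * ν / (γ * ν + 2 * μ ^ 2) := by
    rw [hf0', hfd', hν]
    rw [div_div_div_eq]
    rw [div_eq_div_iff (by positivity) (by positivity)]
    ring
  refine ⟨hf0', hfd', hq, ?_⟩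
  rw [hq]
  field_simp
  ring
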